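/- Let a, b ≥ 2 be coprime natural numbers and let i ≥ 1. Then (∏ over the finite set of m ≥ 1 with ℓ(a,b,m) < i of m) · M_i = (a·b·i)!, where M_i denotes the product of all natural numbers m with 1 ≤ m ≤ a·b·i and ℓ(a,b,m) = i. Equivalently, (a·b·i)!/M_i = ∏_{ℓ(a,b,k) < i} k. -/

import Mathlib

/-- `ell a b m` is the number of pairs `(i, j)` of positive integers with `m = a * i + b * j`. -/
noncomputable def ell (a b m : ℕ) : ℕ :=
  {p : ℕ × ℕ | 0 < p.1 ∧ 0 < p.2 ∧ m = a * p.1 + b * p.2}.ncard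

namespace EllAux

def sol (a b m : ℕ) : Set (ℕ × ℕ) :=
  {p : ℕ × ℕ | 0 < p.1 ∧ 0 < p.2 ∧ m = a * p.1 + b * p.2}

lemma ell_eq (a b m : ℕ) : ell a b m = (sol a b m).ncard := rfl

lemma sol_finite {a b : ℕ} (m : ℕ) (ha : 1 ≤ a) (hb : 1 ≤ b) : (sol a b m).Finite := by
  apply Set.Finite.subset ((Set.finite_Icc 0 m).prod (Set.finite_Icc 0 m))
  rintro ⟨x, y⟩ ⟨hx, hy, h⟩
  simp only [Prod.fst, Prod.snd] at hx hy h
  have h1 : a * x ≤ m := by omega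
  have h2 : b * y ≤ m := by omega
  have h1' : x ≤ a * x := Nat.le_mul_of_pos_left x (by omega)
  have h2' : y ≤ b * y := Nat.le_mul_of_pos_left y (by omega)
  exact ⟨Set.mem_Icc.mpr ⟨Nat.zero_le _, by omega⟩, Set.mem_Icc.mpr ⟨Nat.zero_le _, by omega⟩⟩

/-- uniqueness of a solution of `m` with first coordinate in `[1, b]` -/
lemma sol_unique {a b m : ℕ} (hab : Nat.gcd a b = 1) (hb : 1 ≤ b)
    {p q : ℕ × ℕ} (hp : p ∈ sol a b m) (hq : q ∈ sol a b m)
    (hpb : p.1 ≤ b) (hqb : q.1 ≤ b) : p = q := by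
  obtain ⟨hp1, hp2, hp3⟩ := hp
  obtain ⟨hq1, hq2, hq3⟩ := hq
  have hmod : a * p.1 ≡ a * q.1 [MOD b] := by
    have h1 : a * p.1 % b = m % b := by
      conv_rhs => rw [hp3]
      simp [Nat.add_mul_mod_self_left, Nat.mul_mod_left, Nat.add_mod]
    have h2 : a * q.1 % b = m % b := by
      conv_rhs => rw [hq3]
      simp [Nat.add_mul_mod_self_left, Nat.mul_mod_left, Nat.add_mod]
    unfold Nat.ModEq
    omega
  have h := Nat.ModEq.cancel_left_of_coprime (by rwa [Nat.gcd_comm] at hab) hmod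
  have h1 : p.1 = q.1 := by
    rcases lt_or_eq_of_le hpb with h' | h' <;> rcases lt_or_eq_of_le hqb with h'' | h''
    · have e1 := Nat.mod_eq_of_lt h'
      have e2 := Nat.mod_eq_of_lt h''
      unfold Nat.ModEq at h
      omega
    · exfalso
      have e1 := Nat.mod_eq_of_lt h'
      have e2 : q.1 % b = 0 := by rw [h'']; exact Nat.mod_self b
      unfold Nat.ModEq at h
      omega
    · exfalso
      have e2 := Nat.mod_eq_of_lt h''
      have e1 : p.1 % b = 0 := by rw [h']; exact Nat.mod_self b
      unfold Nat.ModEq at h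
      omega
    · rw [h', h'']
  have h2 : p.2 = q.2 := by
    rw [hp3, h1] at hq3
    have := Nat.eq_of_mul_eq_mul_left (show 0 < b by omega) (show b * p.2 = b * q.2 by omega)
    exact this
  exact Prod.ext h1 h2

/-- existence of a solution of `m + a*b` with first coordinate in `[1, b]` -/
lemma sol_exists {a b m : ℕ} (ha : 2 ≤ a) (hb : 2 ≤ b) (hab : Nat.gcd a b = 1) (hm : 1 ≤ m) :
    ∃ p ∈ sol a b (m + a * b), p.1 ≤ b := by
  -- first get any solution
  have hfrob := frobeniusNumber_pair hab ha hb
  have hmn : a + b ≤ a * b := Nat.add_le_mul ha hb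
  have hkey : m + a * b - a - b ∈ AddSubmonoid.closure ({a, b} : Set ℕ) := by
    by_contra hc
    have := hfrob.2 hc
    omega
  rw [AddSubmonoid.mem_closure_pair] at hkey
  obtain ⟨u, v, huv⟩ := hkey
  simp only [smul_eq_mul] at huv
  have hsol : (u + 1, v + 1) ∈ sol a b (m + a * b) := by
    refine ⟨Nat.succ_pos u, Nat.succ_pos v, ?_⟩
    simp only
    have : u * a + v * b = m + a * b - a - b := huv
    have : m + a * b = u * a + v * b + a + b := by omega
    rw [this]; ring
  -- then reduce the first coordinate mod b
  have reduce : ∀ x : ℕ, ∀ y : ℕ, 0 < x → 0 < y → m + a * b = a * x + b * y →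
      ∃ p ∈ sol a b (m + a * b), p.1 ≤ b := by
    intro x
    induction x using Nat.strong_induction_on with
    | _ x ih =>
      intro y hx hy hxy
      by_cases hxb : x ≤ b
      · exact ⟨(x, y), ⟨hx, hy, hxy⟩, hxb⟩
      · have e1 : a * x = a * (x - b) + a * b := by
          rw [← Nat.mul_add]; congr 1; omega
        have e2 : b * (y + a) = b * y + a * b := by ring
        exact ih (x - b) (by omega) (y + a) (by omega) (by omega) (by omega)
  exact reduce (u + 1) (v + 1) (Nat.succ_pos u) (Nat.succ_pos v) hsol.2.2

lemma first_le {a b m : ℕ} (ha : 1 ≤ a) (hb : 1 ≤ b) (hm : m ≤ a * b) {p : ℕ × ℕ}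
    (hp : p ∈ sol a b m) : p.1 ≤ b := by
  obtain ⟨h1, h2, h3⟩ := hp
  by_contra hc
  have e1 : a * (b + 1) ≤ a * p.1 := Nat.mul_le_mul_left a (by omega)
  have e2 : b ≤ b * p.2 := Nat.le_mul_of_pos_right b h2
  have e3 : a * (b + 1) = a * b + a := by ring
  omega

lemma ell_le_one {a b : ℕ} (ha : 2 ≤ a) (hb : 2 ≤ b) (hab : Nat.gcd a b = 1) {m : ℕ}
    (hm : m ≤ a * b) : ell a b m ≤ 1 := by
  rw [ell_eq, Set.ncard_le_one (sol_finite m (by omega) (by omega))]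
  intro p hp q hq
  exact sol_unique hab (by omega) hp hq (first_le (by omega) (by omega) hm hp)
    (first_le (by omega) (by omega) hm hq)

lemma ell_zero (a b : ℕ) (ha : 1 ≤ a) (hb : 1 ≤ b) : ell a b 0 = 0 := by
  rw [ell_eq]
  have : sol a b 0 = ∅ := by
    ext ⟨x, y⟩
    simp only [sol, Set.mem_setOf_eq, Set.mem_empty_iff_false, iff_false]
    rintro ⟨hx, hy, h3⟩
    have := Nat.mul_pos (show 0 < a by omega) hx
    omega
  rw [this, Set.ncard_empty]

lemma ell_shift {a b m : ℕ} (ha : 2 ≤ a) (hb : 2 ≤ b) (hab : Nat.gcd a b = 1) (hm : 1 ≤ m) :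
    ell a b (m + a * b) = ell a b m + 1 := by
  obtain ⟨p₀, hp₀, hp₀b⟩ := sol_exists ha hb hab hm
  have hA : {p ∈ sol a b (m + a * b) | b < p.1}
      = (fun p : ℕ × ℕ => (p.1 + b, p.2)) '' sol a b m := by
    ext ⟨x, y⟩
    simp only [Set.mem_setOf_eq, Set.mem_image, Prod.mk.injEq, Prod.exists]
    constructor
    · rintro ⟨⟨h1, h2, h3⟩, h4⟩
      simp only [Prod.fst, Prod.snd] at h1 h2 h3 h4
      refine ⟨x - b, y, ⟨by omega, h2, ?_⟩, by omega, rfl⟩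
      have e1 : a * x = a * (x - b) + a * b := by
        rw [← Nat.mul_add]; congr 1; omega
      simp only [Prod.fst, Prod.snd]
      omega
    · rintro ⟨u, v, ⟨h1, h2, h3⟩, h4, h5⟩
      simp only [Prod.fst, Prod.snd] at h1 h2 h3
      subst h4; subst h5
      have e1 : a * (u + b) = a * u + a * b := by ring
      refine ⟨⟨by omega, h2, by simp only [Prod.fst, Prod.snd]; omega⟩, by omega⟩
  have hB : {p ∈ sol a b (m + a * b) | p.1 ≤ b} = {p₀} := by
    ext p
    simp only [Set.mem_setOf_eq, Set.mem_singleton_iff]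
    constructor
    · rintro ⟨hp, hpb⟩
      exact sol_unique hab (by omega) hp hp₀ hpb hp₀b
    · rintro rfl
      exact ⟨hp₀, hp₀b⟩
  have hsplit : sol a b (m + a * b)
      = {p ∈ sol a b (m + a * b) | b < p.1} ∪ {p ∈ sol a b (m + a * b) | p.1 ≤ b} := by
    ext p
    by_cases hc : b < p.1 <;> simp [hc] <;> omega
  have hdisj : Disjoint {p ∈ sol a b (m + a * b) | b < p.1}
      {p ∈ sol a b (m + a * b) | p.1 ≤ b} := by
    rw [Set.disjoint_left]
    rintro p ⟨_, h1⟩ ⟨_, h2⟩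
    omega
  have hfin1 : {p ∈ sol a b (m + a * b) | b < p.1}.Finite :=
    (sol_finite _ (by omega) (by omega)).subset (Set.sep_subset _ _)
  have hfin2 : {p ∈ sol a b (m + a * b) | p.1 ≤ b}.Finite :=
    (sol_finite _ (by omega) (by omega)).subset (Set.sep_subset _ _)
  have hinj : Set.InjOn (fun p : ℕ × ℕ => (p.1 + b, p.2)) (sol a b m) := by
    rintro ⟨x, y⟩ _ ⟨u, v⟩ _ h
    simp only [Prod.mk.injEq] at h ⊢
    omega
  rw [ell_eq, ell_eq, hsplit, Set.ncard_union_eq hdisj hfin1 hfin2, hA, hB,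
    Set.ncard_image_of_injOn hinj, Set.ncard_singleton]

lemma ell_le (a b : ℕ) (ha : 2 ≤ a) (hb : 2 ≤ b) (hab : Nat.gcd a b = 1) :
    ∀ i m, m ≤ a * b * i → ell a b m ≤ i := by
  intro i
  induction i with
  | zero =>
    intro m hm
    have : m = 0 := by omega
    subst this
    rw [ell_zero a b (by omega) (by omega)]
  | succ i ih =>
    intro m hm
    by_cases h : m ≤ a * b
    · have := ell_le_one ha hb hab h
      omega
    · have hab1 : 1 ≤ a * b := Nat.mul_pos (by omega) (by omega)
      have h2 : m - a * b + a * b = m := by omega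
      have e : a * b * (i + 1) = a * b * i + a * b := by ring
      have := ih (m - a * b) (by omega)
      rw [← h2, ell_shift ha hb hab (by omega)]
      omega

lemma le_ell (a b : ℕ) (ha : 2 ≤ a) (hb : 2 ≤ b) (hab : Nat.gcd a b = 1) :
    ∀ i m, a * b * i < m → i ≤ ell a b m := by
  intro i
  induction i with
  | zero => intro m _; exact Nat.zero_le _
  | succ i ih =>
    intro m hm
    have e : a * b * (i + 1) = a * b * i + a * b := by ring
    have hab1 : 1 ≤ a * b := Nat.mul_pos (by omega) (by omega)
    have h2 : m - a * b + a * b = m := by omega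
    have := ih (m - a * b) (by omega)
    rw [← h2, ell_shift ha hb hab (by omega)]
    omega

end EllAux

theorem prod_ell_lt_mul_M_eq_factorial (a b : ℕ) (ha : 2 ≤ a) (hb : 2 ≤ b)
    (hab : Nat.gcd a b = 1) (i : ℕ) (hi : 1 ≤ i)
    (hfin : {m : ℕ | 1 ≤ m ∧ ell a b m < i}.Finite) :
    (∏ m ∈ hfin.toFinset, m) *
        (∏ m ∈ (Finset.Icc 1 (a * b * i)).filter (fun m => ell a b m = i), m) =
      Nat.factorial (a * b * i) := by
  classical
  have key1 : ∀ m ∈ Finset.Icc 1 (a * b * i), ell a b m ≤ i := fun m hm =>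
    EllAux.ell_le a b ha hb hab i m (Finset.mem_Icc.mp hm).2
  have hset : hfin.toFinset = (Finset.Icc 1 (a * b * i)).filter (fun m => ell a b m < i) := by
    ext m
    simp only [Set.Finite.mem_toFinset, Set.mem_setOf_eq, Finset.mem_filter, Finset.mem_Icc]
    constructor
    · rintro ⟨h1, h2⟩
      refine ⟨⟨h1, ?_⟩, h2⟩
      by_contra hc
      have := EllAux.le_ell a b ha hb hab i m (by omega)
      omega
    · rintro ⟨⟨h1, _⟩, h2⟩
      exact ⟨h1, h2⟩
  have hfilter : (Finset.Icc 1 (a * b * i)).filter (fun m => ell a b m = i)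
      = (Finset.Icc 1 (a * b * i)).filter (fun m => ¬ ell a b m < i) := by
    apply Finset.filter_congr
    intro m hm
    have := key1 m hm
    constructor <;> omega
  rw [hset, hfilter, Finset.prod_filter_mul_prod_filter_not, ← Finset.Ico_add_one_right_eq_Icc,
    Finset.prod_Ico_id_eq_factorial]
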